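/- For k ≥ 2, if f is a homomorphism from the freezing gadget F_k(x,y) to the odd wheel W_{2k+1} with f(x) = f(y) = α (the hub), then f is frozen. -/

import Mathlib

def IsHom {A B : Type*} (AdjG : A → A → Prop) (AdjH : B → B → Prop) (f : A → B) : Prop :=
  ∀ u v : A, AdjG u v → AdjH (f u) (f v)

open Classical in
/-- The map obtained from `f` by recolouring the vertex `v` to the colour `b`. -/
noncomputable def recol {A B : Type*} (f : A → B) (v : A) (b : B) : A → B :=
  fun x => if x = v then b else f x

/-- `f` is frozen: a homomorphism such that no single-vertex recolouring is one. -/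
def Frozen {A B : Type*} (AdjG : A → A → Prop) (AdjH : B → B → Prop) (f : A → B) : Prop :=
  IsHom AdjG AdjH f ∧ ∀ (v : A) (b : B), b ≠ f v → ¬ IsHom AdjG AdjH (recol f v b)

/-- The vertex set of the wheel `W_{2k+1}`: `none` is the hub `α`, `some i` the rim. -/
abbrev WheelV (k : ℕ) : Type := Option (ZMod (2 * k + 1))

/-- Adjacency in the wheel `W_{2k+1}`: the hub is adjacent to every rim vertex and rim
vertices `i, j` are adjacent iff they are consecutive on the `(2k+1)`-cycle. -/
def WheelAdj (k : ℕ) : WheelV k → WheelV k → Prop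
  | none, none => False
  | none, some _ => True
  | some _, none => True
  | some i, some j => j = i + 1 ∨ i = j + 1

/-- The vertex set of the freezing gadget `F_k(x,y)`. -/
inductive GV (k : ℕ) : Type
  | x : GV k
  | y : GV k
  | zx : ZMod (4 * k - 2) → GV k
  | zy : ZMod (4 * k - 2) → GV k
  | bx : GV k
  | b_y : GV k
  | w : ZMod (2 * k + 1) → GV k
  | al : GV k
deriving DecidableEq

/-- The edges of the freezing gadget `F_k(x,y)` (one orientation of each edge):
`z^x` and `z^y` are cycles of length `4k-2`; `z^x_1, z^x_{2k}` are adjacent to `x` and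
`z^y_1, z^y_{2k}` to `y`; `z^x_0, z^x_{2k-1}` are adjacent to `b^x` and `z^y_0, z^y_{2k-1}`
to `b^y`; `y` is adjacent to `b^x` and `x` to `b^y`; `w` is a cycle of length `2k+1`; and
`α'` is joined to every vertex except itself, `x`, `y` and the neighbours of `x` and `y`. -/
def GE (k : ℕ) : GV k → GV k → Prop
  | .zx i, .zx j => j = i + 1
  | .zy i, .zy j => j = i + 1
  | .x, .zx i => i = 1 ∨ i = ((2 * k : ℕ) : ZMod (4 * k - 2))
  | .y, .zy i => i = 1 ∨ i = ((2 * k : ℕ) : ZMod (4 * k - 2))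
  | .bx, .zx i => i = 0 ∨ i = ((2 * k - 1 : ℕ) : ZMod (4 * k - 2))
  | .b_y, .zy i => i = 0 ∨ i = ((2 * k - 1 : ℕ) : ZMod (4 * k - 2))
  | .y, .bx => True
  | .x, .b_y => True
  | .w i, .w j => j = i + 1
  | .al, .zx i => i ≠ 1 ∧ i ≠ ((2 * k : ℕ) : ZMod (4 * k - 2))
  | .al, .zy i => i ≠ 1 ∧ i ≠ ((2 * k : ℕ) : ZMod (4 * k - 2))
  | .al, .w _ => True
  | _, _ => False

/-- The (symmetric) adjacency relation of the freezing gadget `F_k(x,y)`. -/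
def GAdj (k : ℕ) (u v : GV k) : Prop := GE k u v ∨ GE k v u



open Finset in
lemma sum_sign_modeq (L : ℕ) (s : ℕ → ℤ) (hs : ∀ i < L, s i = 1 ∨ s i = -1) :
    |∑ i ∈ range L, s i| ≤ L ∧ (∑ i ∈ range L, s i) % 2 = (L : ℤ) % 2 := by
  induction L with
  | zero => simp
  | succ L ih =>
    obtain ⟨h1, h2⟩ := ih (fun i hi => hs i (by omega))
    rw [Finset.sum_range_succ]
    rcases hs L (by omega) with h | h <;> rw [h] <;> constructor
    · calc |∑ i ∈ range L, s i + 1| ≤ |∑ i ∈ range L, s i| + 1 := abs_add_le _ _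
        _ ≤ L + 1 := by omega
      
    · omega
    · calc |∑ i ∈ range L, s i + (-1)| ≤ |∑ i ∈ range L, s i| + |(-1 : ℤ)| := abs_add_le _ _
        _ ≤ L + 1 := by simp; omega
    · omega

open Finset in
lemma sum_sign_all_one (L : ℕ) (s : ℕ → ℤ) (hs : ∀ i < L, s i = 1 ∨ s i = -1)
    (h : ∑ i ∈ range L, s i = L) : ∀ i < L, s i = 1 := by
  have h0 : ∑ i ∈ range L, (1 - s i) = 0 := by
    rw [Finset.sum_sub_distrib, h]; simp
  have h1 := (Finset.sum_eq_zero_iff_of_nonneg ?_).mp h0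
  · intro i hi
    have := h1 i (Finset.mem_range.mpr hi)
    omega
  · intro i hi
    rcases hs i (Finset.mem_range.mp hi) with h | h <;> omega

open Finset in
lemma sum_sign_all_neg (L : ℕ) (s : ℕ → ℤ) (hs : ∀ i < L, s i = 1 ∨ s i = -1)
    (h : ∑ i ∈ range L, s i = -(L : ℤ)) : ∀ i < L, s i = -1 := by
  have h2 := sum_sign_all_one L (fun i => -(s i)) (fun i hi => by rcases hs i hi with h|h <;> simp [h])
    (by rw [Finset.sum_neg_distrib, h]; ring)
  intro i hi; have : -(s i) = 1 := h2 i hi; omega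
open Finset in
lemma walk_lift {n : ℕ} (hn : 5 ≤ n) (a : ℕ → ZMod n) (L : ℕ)
    (h : ∀ i < L, a (i+1) = a i + 1 ∨ a (i+1) = a i - 1) :
    ∃ s : ℕ → ℤ, (∀ i < L, s i = 1 ∨ s i = -1) ∧
      (∀ i < L, s i = 1 → a (i+1) = a i + 1) ∧
      (∀ i < L, s i = -1 → a (i+1) = a i - 1) ∧
      (a L = a 0 + ((∑ i ∈ range L, s i : ℤ) : ZMod n)) := by
  classical
  refine ⟨fun i => if a (i+1) = a i + 1 then 1 else -1, ?_, ?_, ?_, ?_⟩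
  · intro i hi; by_cases hc : a (i+1) = a i + 1 <;> simp [hc]
  · intro i hi hs; by_cases hc : a (i+1) = a i + 1
    · exact hc
    · simp [hc] at hs
  · intro i hi hs; by_cases hc : a (i+1) = a i + 1
    · simp [hc] at hs
    · rcases h i hi with h' | h'
      · exact absurd h' hc
      · exact h'
  · induction L with
    | zero => simp
    | succ L ih =>
      have hL := ih (fun i hi => h i (by omega))
      simp only [Finset.sum_range_succ]
      by_cases hc : a (L+1) = a L + 1
      · rw [if_pos hc, hc, hL]; push_cast; ring
      · rcases h L (by omega) with h' | h'
        · exact absurd h' hc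
        · rw [if_neg hc, h', hL]; push_cast; ring

lemma walk_linear {n : ℕ} (a : ℕ → ZMod n) (L : ℕ) (e : ZMod n)
    (h : ∀ i < L, a (i+1) = a i + e) : ∀ j ≤ L, a j = a 0 + (j : ZMod n) * e := by
  intro j hj
  induction j with
  | zero => simp
  | succ j ih =>
    rw [h j (by omega), ih (by omega)]
    push_cast; ring

/-- rigidity for an odd cycle walk of length n -/
lemma wcycle_rigid {n : ℕ} (hn : 5 ≤ n) (hodd : Odd n) (a : ℕ → ZMod n)
    (h : ∀ i < n, a (i+1) = a i + 1 ∨ a (i+1) = a i - 1) (hc : a n = a 0) :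
    (∀ i < n, a (i+1) = a i + 1) ∨ (∀ i < n, a (i+1) = a i - 1) := by
  obtain ⟨s, hs, h1, h2, hsum⟩ := walk_lift hn a n h
  haveI : NeZero n := ⟨by omega⟩
  set T := ∑ i ∈ Finset.range n, s i with hT
  obtain ⟨hb, hpar⟩ := sum_sign_modeq n s hs
  rw [hc] at hsum
  have hz : ((T : ℤ) : ZMod n) = 0 := by linear_combination -hsum
  have hdvd : (n : ℤ) ∣ T := (ZMod.intCast_zmod_eq_zero_iff_dvd T n).mp hz
  obtain ⟨t, ht⟩ := hodd
  rcases abs_le.mp hb with ⟨hb1, hb2⟩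
  have habs : T = n ∨ T = -(n:ℤ) := by
    have h0 : T ≠ 0 := by omega
    have := Int.le_of_dvd (abs_pos.mpr h0) ((dvd_abs _ _).mpr hdvd)
    rcases abs_cases T with ⟨he, _⟩ | ⟨he, _⟩ <;> omega
  rcases habs with he | he
  · exact Or.inl (fun i hi => h1 i hi (sum_sign_all_one n s hs he i hi))
  · exact Or.inr (fun i hi => h2 i hi (sum_sign_all_neg n s hs he i hi))

/-- rigidity for an arc of length n-2 with endpoint displacement in {0,2,-2} -/
lemma zarc_rigid {n : ℕ} (hn : 5 ≤ n) (hodd : Odd n) (a : ℕ → ZMod n) (L : ℕ) (hL : L + 2 = n)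
    (h : ∀ i < L, a (i+1) = a i + 1 ∨ a (i+1) = a i - 1)
    (hend : a L = a 0 + 2 ∨ a L = a 0 - 2 ∨ a L = a 0) :
    (a L = a 0 + 2 ∧ ∀ i < L, a (i+1) = a i - 1) ∨
    (a L = a 0 - 2 ∧ ∀ i < L, a (i+1) = a i + 1) := by
  obtain ⟨s, hs, h1, h2, hsum⟩ := walk_lift hn a L h
  haveI : NeZero n := ⟨by omega⟩
  set T := ∑ i ∈ Finset.range L, s i with hT
  obtain ⟨hb, hpar⟩ := sum_sign_modeq L s hs
  obtain ⟨t, ht⟩ := hodd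
  rcases abs_le.mp hb with ⟨hb1, hb2⟩
  rcases hend with he | he | he
  · rw [he] at hsum
    have hz : ((T - 2 : ℤ) : ZMod n) = 0 := by push_cast; linear_combination -hsum
    have hdvd := (ZMod.intCast_zmod_eq_zero_iff_dvd _ n).mp hz
    have hTe : T = -(L:ℤ) := by
      by_cases h0 : T - 2 = 0
      · omega
      · have := Int.le_of_dvd (abs_pos.mpr h0) ((dvd_abs _ _).mpr hdvd)
        rcases abs_cases (T-2) with ⟨e1,_⟩|⟨e1,_⟩ <;> omega
    exact Or.inl ⟨he, fun i hi => h2 i hi (sum_sign_all_neg L s hs hTe i hi)⟩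
  · rw [he] at hsum
    have hz : ((T + 2 : ℤ) : ZMod n) = 0 := by push_cast; linear_combination -hsum
    have hdvd := (ZMod.intCast_zmod_eq_zero_iff_dvd _ n).mp hz
    have hTe : T = (L:ℤ) := by
      by_cases h0 : T + 2 = 0
      · omega
      · have := Int.le_of_dvd (abs_pos.mpr h0) ((dvd_abs _ _).mpr hdvd)
        rcases abs_cases (T+2) with ⟨e1,_⟩|⟨e1,_⟩ <;> omega
    exact Or.inr ⟨he, fun i hi => h1 i hi (sum_sign_all_one L s hs hTe i hi)⟩
  · exfalso
    rw [he] at hsum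
    have hz : ((T : ℤ) : ZMod n) = 0 := by linear_combination -hsum
    have hdvd := (ZMod.intCast_zmod_eq_zero_iff_dvd _ n).mp hz
    by_cases h0 : T = 0
    · omega
    · have := Int.le_of_dvd (abs_pos.mpr h0) ((dvd_abs _ _).mpr hdvd)
      rcases abs_cases T with ⟨e1,_⟩|⟨e1,_⟩ <;> omega
lemma znz (k : ℕ) (hk : 2 ≤ k) (c : ℕ) (hc : 0 < c) (hc2 : c ≤ 6) (hc3 : c ≠ 5) :
    ((c : ℕ) : ZMod (2*k+1)) ≠ 0 := by
  haveI : NeZero (2*k+1) := ⟨by omega⟩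
  intro h
  rw [ZMod.natCast_eq_zero_iff] at h
  have h1 := Nat.le_of_dvd hc h
  have h2 : k = 2 := by omega
  subst h2
  omega

lemma wstruct (k : ℕ) (hk : 2 ≤ k) (c : ZMod (2*k+1) → ZMod (2*k+1))
    (hstep : ∀ i, c (i+1) = c i + 1 ∨ c (i+1) = c i - 1) :
    (∀ i, c (i+1) = c i + 1) ∨ (∀ i, c (i+1) = c i - 1) := by
  haveI : NeZero (2*k+1) := ⟨by omega⟩
  set cN : ℕ → ZMod (2*k+1) := fun j => c (j : ZMod (2*k+1)) with hcN
  have hstepN : ∀ j < 2*k+1, cN (j+1) = cN j + 1 ∨ cN (j+1) = cN j - 1 := by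
    intro j _
    have := hstep ((j : ZMod (2*k+1)))
    simpa [cN, Nat.cast_add] using this
  have hcl : cN (2*k+1) = cN 0 := by simp [cN]
  have hval : ∀ i : ZMod (2*k+1), ((i.val : ℕ) : ZMod (2*k+1)) = i := fun i =>
    ZMod.natCast_rightInverse i
  rcases wcycle_rigid (by omega) ⟨k, by omega⟩ cN hstepN hcl with h | h
  · left; intro i
    have h1 := h i.val (ZMod.val_lt i)
    simp only [cN, Nat.cast_add, Nat.cast_one, hval] at h1
    exact h1
  · right; intro i
    have h1 := h i.val (ZMod.val_lt i)
    simp only [cN, Nat.cast_add, Nat.cast_one, hval] at h1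
    exact h1

lemma zstruct (k : ℕ) (hk : 2 ≤ k) (a : ZMod (4*k-2) → ZMod (2*k+1)) (b : ZMod (2*k+1))
    (hstep : ∀ i, a (i+1) = a i + 1 ∨ a (i+1) = a i - 1)
    (hb0 : a 0 = b + 1 ∨ a 0 = b - 1)
    (hb1 : a ((2*k-1 : ℕ) : ZMod (4*k-2)) = b + 1 ∨ a ((2*k-1:ℕ) : ZMod (4*k-2)) = b - 1) :
    ∃ e : ZMod (2*k+1), (e = 1 ∨ e = -1) ∧
      (∀ j : ℕ, j ≤ 2*k-1 → a ((j : ℕ) : ZMod (4*k-2)) = b + ((j:ZMod (2*k+1))+1)*e) ∧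
      (∀ j : ℕ, j ≤ 2*k-1 → a ((2*k-1+j : ℕ) : ZMod (4*k-2)) = b - ((j:ZMod (2*k+1))+1)*e) := by
  haveI : NeZero (2*k+1) := ⟨by omega⟩
  haveI : NeZero (4*k-2) := ⟨by omega⟩
  have h2 : (2 : ZMod (2*k+1)) ≠ 0 := by
    have := znz k hk 2 (by omega) (by omega) (by omega); exact_mod_cast this
  have h4 : (4 : ZMod (2*k+1)) ≠ 0 := by
    have := znz k hk 4 (by omega) (by omega) (by omega); exact_mod_cast this
  set aN : ℕ → ZMod (2*k+1) := fun j => a (j : ZMod (4*k-2)) with haN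
  have hstepN : ∀ j, aN (j+1) = aN j + 1 ∨ aN (j+1) = aN j - 1 := by
    intro j
    have := hstep ((j : ZMod (4*k-2)))
    simpa [aN, Nat.cast_add] using this
  have hb0' : aN 0 = b + 1 ∨ aN 0 = b - 1 := by
    show a ((0:ℕ) : ZMod (4*k-2)) = b + 1 ∨ a ((0:ℕ) : ZMod (4*k-2)) = b - 1
    rwa [Nat.cast_zero]
  have hb1' : aN (2*k-1) = b + 1 ∨ aN (2*k-1) = b - 1 := hb1
  have hend1 : aN (2*k-1) = aN 0 + 2 ∨ aN (2*k-1) = aN 0 - 2 ∨ aN (2*k-1) = aN 0 := by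
    rcases hb0' with h | h <;> rcases hb1' with h' | h'
    · right; right; rw [h', h]
    · right; left; rw [h', h]; ring
    · left; rw [h', h]; ring
    · right; right; rw [h', h]
  have harc1 := zarc_rigid (n := 2*k+1) (by omega) ⟨k, by omega⟩ aN (2*k-1) (by omega)
    (fun i _ => hstepN i) hend1
  have hclose : aN (2*k-1 + (2*k-1)) = aN 0 := by
    rw [show 2*k-1 + (2*k-1) = 4*k-2 by omega]
    show a ((4*k-2 : ℕ) : ZMod (4*k-2)) = aN 0
    rw [ZMod.natCast_self]
    show _ = a ((0:ℕ) : ZMod (4*k-2))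
    rw [Nat.cast_zero]
  rcases harc1 with ⟨hd, hsteps⟩ | ⟨hd, hsteps⟩
  · -- displacement +2, steps -1, e = -1
    have ha0 : aN 0 = b - 1 := by
      rcases hb0' with h | h
      · exfalso
        rcases hb1' with h' | h'
        · exact h2 (by linear_combination -hd + h' - h)
        · exact h4 (by linear_combination -hd + h' - h)
      · exact h
    have haL : aN (2*k-1) = b + 1 := by rw [hd, ha0]; ring
    have hlin := walk_linear aN (2*k-1) (-1) (fun i hi => by rw [hsteps i hi]; ring)
    refine ⟨-1, Or.inr rfl, ?_, ?_⟩
    · intro j hj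
      show aN j = b + ((j:ZMod (2*k+1))+1) * (-1)
      rw [hlin j hj, ha0]; ring
    · set a2 : ℕ → ZMod (2*k+1) := fun j => aN (2*k-1+j) with ha2
      have hstep2 : ∀ j, a2 (j+1) = a2 j + 1 ∨ a2 (j+1) = a2 j - 1 := fun j => hstepN (2*k-1+j)
      have ha20 : a2 0 = b + 1 := haL
      have hend2 : a2 (2*k-1) = a2 0 - 2 := by
        show aN (2*k-1+(2*k-1)) = a2 0 - 2
        rw [hclose, ha20, ha0]; ring
      have harc2 := zarc_rigid (n := 2*k+1) (by omega) ⟨k, by omega⟩ a2 (2*k-1) (by omega)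
        (fun i _ => hstep2 i) (Or.inr (Or.inl hend2))
      rcases harc2 with ⟨hd2, _⟩ | ⟨_, hsteps2⟩
      · exact absurd (by linear_combination hend2 - hd2 : (4:ZMod (2*k+1)) = 0) h4
      · have hlin2 := walk_linear a2 (2*k-1) 1 (fun i hi => hsteps2 i hi)
        intro j hj
        show a2 j = b - ((j:ZMod (2*k+1))+1) * (-1)
        rw [hlin2 j hj, ha20]; ring
  · -- displacement -2, steps +1, e = 1
    have ha0 : aN 0 = b + 1 := by
      rcases hb0' with h | h
      · exact h
      · exfalso
        rcases hb1' with h' | h'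
        · exact h4 (by linear_combination hd - h' + h)
        · exact h2 (by linear_combination hd - h' + h)
    have haL : aN (2*k-1) = b - 1 := by rw [hd, ha0]; ring
    have hlin := walk_linear aN (2*k-1) 1 (fun i hi => hsteps i hi)
    refine ⟨1, Or.inl rfl, ?_, ?_⟩
    · intro j hj
      show aN j = b + ((j:ZMod (2*k+1))+1) * 1
      rw [hlin j hj, ha0]; ring
    · set a2 : ℕ → ZMod (2*k+1) := fun j => aN (2*k-1+j) with ha2
      have hstep2 : ∀ j, a2 (j+1) = a2 j + 1 ∨ a2 (j+1) = a2 j - 1 := fun j => hstepN (2*k-1+j)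
      have ha20 : a2 0 = b - 1 := haL
      have hend2 : a2 (2*k-1) = a2 0 + 2 := by
        show aN (2*k-1+(2*k-1)) = a2 0 + 2
        rw [hclose, ha20, ha0]; ring
      have harc2 := zarc_rigid (n := 2*k+1) (by omega) ⟨k, by omega⟩ a2 (2*k-1) (by omega)
        (fun i _ => hstep2 i) (Or.inl hend2)
      rcases harc2 with ⟨_, hsteps2⟩ | ⟨hd2, _⟩
      · have hlin2 := walk_linear a2 (2*k-1) (-1) (fun i hi => by rw [hsteps2 i hi]; ring)
        intro j hj
        show a2 j = b - ((j:ZMod (2*k+1))+1) * 1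
        rw [hlin2 j hj, ha20]; ring
      · exact absurd (by linear_combination hd2 - hend2 : (4:ZMod (2*k+1)) = 0) h4

lemma midlem {n : ℕ} (h2 : (2:ZMod n) ≠ 0) (h4 : (4:ZMod n) ≠ 0)
    (p e t : ZMod n) (he : e = 1 ∨ e = -1)
    (hA : t = p + 1 ∨ t = p - 1) (hB : t = (p + 2*e) + 1 ∨ t = (p + 2*e) - 1) :
    t = p + e := by
  rcases he with rfl | rfl <;> rcases hA with rfl | rfl <;> rcases hB with h | h <;>
    first
      | ring1
      | exact absurd (by linear_combination h : (2:ZMod n) = 0) h2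
      | exact absurd (by linear_combination -h : (2:ZMod n) = 0) h2
      | exact absurd (by linear_combination h : (4:ZMod n) = 0) h4
      | exact absurd (by linear_combination -h : (4:ZMod n) = 0) h4
      | exact absurd (by linear_combination h/2 : (2:ZMod n) = 0) h2
      | exact absurd (by linear_combination -h/2 : (2:ZMod n) = 0) h2

lemma dist4lem {n : ℕ} (h2 : (2:ZMod n) ≠ 0) (h4 : (4:ZMod n) ≠ 0) (h6 : (6:ZMod n) ≠ 0)
    (p e t : ZMod n) (he : e = 1 ∨ e = -1)
    (hA : t = p + 1 ∨ t = p - 1) (hB : t = (p + 4*e) + 1 ∨ t = (p + 4*e) - 1) : False := by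
  rcases he with rfl | rfl <;> rcases hA with rfl | rfl <;> rcases hB with h | h <;>
    first
      | exact absurd (by linear_combination h : (2:ZMod n) = 0) h2
      | exact absurd (by linear_combination -h : (2:ZMod n) = 0) h2
      | exact absurd (by linear_combination h : (4:ZMod n) = 0) h4
      | exact absurd (by linear_combination -h : (4:ZMod n) = 0) h4
      | exact absurd (by linear_combination h : (6:ZMod n) = 0) h6
      | exact absurd (by linear_combination -h : (6:ZMod n) = 0) h6

lemma wadj_some {k : ℕ} {c d : ZMod (2*k+1)} :
    WheelAdj k (some c) (some d) ↔ d = c + 1 ∨ d = c - 1 := by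
  show (d = c + 1 ∨ c = d + 1) ↔ _
  constructor
  · rintro (h | h)
    · exact Or.inl h
    · exact Or.inr (by rw [h]; ring)
  · rintro (h | h)
    · exact Or.inl h
    · exact Or.inr (by rw [h]; ring)

lemma wadj_hub {k : ℕ} {o : WheelV k} (h : WheelAdj k none o) : ∃ c, o = some c := by
  cases o with
  | none => exact absurd (h : False) id
  | some c => exact ⟨c, rfl⟩

lemma blockV (k : ℕ) (h2z : (2:ZMod (2*k+1)) ≠ 0) (h4z : (4:ZMod (2*k+1)) ≠ 0)
    (f : GV k → WheelV k) (v u0 u1 u2 : GV k) (p e : ZMod (2*k+1)) (he : e = 1 ∨ e = -1)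
    (ha0 : GAdj k v u0) (ha1 : GAdj k v u1) (ha2 : GAdj k v u2)
    (hn0 : u0 ≠ v) (hn1 : u1 ≠ v) (hn2 : u2 ≠ v)
    (hf0 : f u0 = none) (hf1 : f u1 = some p) (hf2 : f u2 = some (p + 2*e))
    (hfv : f v = some (p + e)) (β : WheelV k) (hβ : β ≠ f v) :
    ¬ IsHom (GAdj k) (WheelAdj k) (recol f v β) := by
  intro hg
  have hg0 := hg v u0 ha0
  have hg1 := hg v u1 ha1
  have hg2 := hg v u2 ha2
  simp only [recol, if_pos rfl, if_neg hn0, if_neg hn1, if_neg hn2] at hg0 hg1 hg2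
  rw [hf0] at hg0
  rw [hf1] at hg1
  rw [hf2] at hg2
  cases β with
  | none => exact (hg0 : False)
  | some t =>
    have h1' : t = p + 1 ∨ t = p - 1 := by
      rcases wadj_some.mp hg1 with h | h
      · exact Or.inr (by rw [h]; ring)
      · exact Or.inl (by rw [h]; ring)
    have h2' : t = (p + 2*e) + 1 ∨ t = (p + 2*e) - 1 := by
      rcases wadj_some.mp hg2 with h | h
      · exact Or.inr (by rw [h]; ring)
      · exact Or.inl (by rw [h]; ring)
    have := midlem h2z h4z p e t he h1' h2'
    exact hβ (by rw [hfv, this])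

lemma blockX (k : ℕ) (h2z : (2:ZMod (2*k+1)) ≠ 0) (h4z : (4:ZMod (2*k+1)) ≠ 0)
    (h6z : (6:ZMod (2*k+1)) ≠ 0)
    (f : GV k → WheelV k) (v u1 u2 : GV k) (p e : ZMod (2*k+1)) (he : e = 1 ∨ e = -1)
    (ha1 : GAdj k v u1) (ha2 : GAdj k v u2) (hn1 : u1 ≠ v) (hn2 : u2 ≠ v)
    (hf1 : f u1 = some p) (hf2 : f u2 = some (p + 4*e))
    (hfv : f v = none) (β : WheelV k) (hβ : β ≠ f v) :
    ¬ IsHom (GAdj k) (WheelAdj k) (recol f v β) := by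
  intro hg
  have hg1 := hg v u1 ha1
  have hg2 := hg v u2 ha2
  simp only [recol, if_pos rfl, if_neg hn1, if_neg hn2] at hg1 hg2
  rw [hf1] at hg1
  rw [hf2] at hg2
  cases β with
  | none => exact hβ hfv.symm
  | some t =>
    have h1' : t = p + 1 ∨ t = p - 1 := by
      rcases wadj_some.mp hg1 with h | h
      · exact Or.inr (by rw [h]; ring)
      · exact Or.inl (by rw [h]; ring)
    have h2' : t = (p + 4*e) + 1 ∨ t = (p + 4*e) - 1 := by
      rcases wadj_some.mp hg2 with h | h
      · exact Or.inr (by rw [h]; ring)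
      · exact Or.inl (by rw [h]; ring)
    exact dist4lem h2z h4z h6z p e t he h1' h2'

lemma blockAl (k : ℕ) (h1z : (1:ZMod (2*k+1)) ≠ 0) (h2z : (2:ZMod (2*k+1)) ≠ 0)
    (h4z : (4:ZMod (2*k+1)) ≠ 0)
    (f : GV k → WheelV k) (v u1 u2 u3 : GV k) (p e : ZMod (2*k+1)) (he : e = 1 ∨ e = -1)
    (ha1 : GAdj k v u1) (ha2 : GAdj k v u2) (ha3 : GAdj k v u3)
    (hn1 : u1 ≠ v) (hn2 : u2 ≠ v) (hn3 : u3 ≠ v)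
    (hf1 : f u1 = some p) (hf2 : f u2 = some (p + e)) (hf3 : f u3 = some (p + 2*e))
    (hfv : f v = none) (β : WheelV k) (hβ : β ≠ f v) :
    ¬ IsHom (GAdj k) (WheelAdj k) (recol f v β) := by
  intro hg
  have hg1 := hg v u1 ha1
  have hg2 := hg v u2 ha2
  have hg3 := hg v u3 ha3
  simp only [recol, if_pos rfl, if_neg hn1, if_neg hn2, if_neg hn3] at hg1 hg2 hg3
  rw [hf1] at hg1
  rw [hf2] at hg2
  rw [hf3] at hg3
  cases β with
  | none => exact hβ hfv.symm
  | some t =>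
    have h1' : t = p + 1 ∨ t = p - 1 := by
      rcases wadj_some.mp hg1 with h | h
      · exact Or.inr (by rw [h]; ring)
      · exact Or.inl (by rw [h]; ring)
    have h3' : t = (p + 2*e) + 1 ∨ t = (p + 2*e) - 1 := by
      rcases wadj_some.mp hg3 with h | h
      · exact Or.inr (by rw [h]; ring)
      · exact Or.inl (by rw [h]; ring)
    have hte : t = p + e := midlem h2z h4z p e t he h1' h3'
    rcases wadj_some.mp hg2 with h | h
    · exact h1z (by linear_combination -h - hte)
    · exact h1z (by linear_combination h + hte)


/-- For `k ≥ 2`, any homomorphism from the freezing gadget `F_k(x,y)` to the odd wheel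
`W_{2k+1}` mapping both `x` and `y` to the hub `α` is frozen. -/
theorem stmt_14 (k : ℕ) (hk : 2 ≤ k) (f : GV k → WheelV k)
    (hf : IsHom (GAdj k) (WheelAdj k) f)
    (hx : f GV.x = none) (hy : f GV.y = none) :
    Frozen (GAdj k) (WheelAdj k) f := by
  haveI : NeZero (2*k+1) := ⟨by omega⟩
  haveI : NeZero (4*k-2) := ⟨by omega⟩
  have h1z : (1 : ZMod (2*k+1)) ≠ 0 := by
    have := znz k hk 1 (by omega) (by omega) (by omega); exact_mod_cast this
  have h2z : (2 : ZMod (2*k+1)) ≠ 0 := by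
    have := znz k hk 2 (by omega) (by omega) (by omega); exact_mod_cast this
  have h3z : (3 : ZMod (2*k+1)) ≠ 0 := by
    have := znz k hk 3 (by omega) (by omega) (by omega); exact_mod_cast this
  have h4z : (4 : ZMod (2*k+1)) ≠ 0 := by
    have := znz k hk 4 (by omega) (by omega) (by omega); exact_mod_cast this
  have h6z : (6 : ZMod (2*k+1)) ≠ 0 := by
    have := znz k hk 6 (by omega) (by omega) (by omega); exact_mod_cast this
  have hm1 : (1 : ZMod (4*k-2)) ≠ 0 := by
    intro h
    have h' : ((1:ℕ) : ZMod (4*k-2)) = 0 := by exact_mod_cast h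
    rw [ZMod.natCast_eq_zero_iff] at h'
    have := Nat.le_of_dvd (by omega) h'
    omega
  have hcastne : ∀ j l : ℕ, j < 4*k-2 → l < 4*k-2 → j ≠ l →
      ((j:ℕ) : ZMod (4*k-2)) ≠ ((l:ℕ) : ZMod (4*k-2)) := by
    intro j l hj hl hne h
    apply hne
    have := congrArg ZMod.val h
    rwa [ZMod.val_cast_of_lt hj, ZMod.val_cast_of_lt hl] at this
  -- Step 1 : the apex must go to the hub
  have hal : f GV.al = none := by
    by_contra hne
    obtain ⟨t, ht⟩ : ∃ t, f GV.al = some t := by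
      cases hfa : f GV.al with
      | none => exact absurd hfa hne
      | some c => exact ⟨c, rfl⟩
    classical
    set u : ℕ → ZMod 2 := fun j =>
      if f (GV.w ((j : ℕ) : ZMod (2*k+1))) = none then 0 else 1 with hu
    have hflip : ∀ j : ℕ, u (j+1) = u j + 1 := by
      intro j
      have hadj := hf (GV.w ((j : ℕ) : ZMod (2*k+1))) (GV.w (((j:ℕ) : ZMod (2*k+1)) + 1))
        (Or.inl rfl)
      have hal1 := hf GV.al (GV.w ((j : ℕ) : ZMod (2*k+1))) (Or.inl trivial)
      have hal2 := hf GV.al (GV.w (((j:ℕ) : ZMod (2*k+1)) + 1)) (Or.inl trivial)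
      rw [ht] at hal1 hal2
      have hcast : ((j+1 : ℕ) : ZMod (2*k+1)) = ((j:ℕ) : ZMod (2*k+1)) + 1 := by
        push_cast; ring
      show (if f (GV.w ((j+1 : ℕ) : ZMod (2*k+1))) = none then (0:ZMod 2) else 1) = _
      rw [hcast]
      cases hw1 : f (GV.w ((j : ℕ) : ZMod (2*k+1))) with
      | none =>
        cases hw2 : f (GV.w (((j:ℕ) : ZMod (2*k+1)) + 1)) with
        | none =>
          rw [hw1, hw2] at hadj
          exact absurd (hadj : False) id
        | some c2 => simp [u, hw1, hw2]
      | some c1 =>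
        cases hw2 : f (GV.w (((j:ℕ) : ZMod (2*k+1)) + 1)) with
        | none => simp [u, hw1, hw2]; decide
        | some c2 =>
          exfalso
          rw [hw1, hw2] at hadj
          rw [hw1] at hal1
          rw [hw2] at hal2
          rcases wadj_some.mp hal1 with e1 | e1 <;> rcases wadj_some.mp hal2 with e2 | e2 <;>
            rcases wadj_some.mp hadj with e3 | e3 <;> rw [e1, e2] at e3 <;>
            first
              | exact h1z (by linear_combination e3)
              | exact h1z (by linear_combination -e3)
              | exact h3z (by linear_combination e3)
              | exact h3z (by linear_combination -e3)
    have hlin := walk_linear u (2*k+1) 1 (fun i _ => hflip i)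
    have h1 := hlin (2*k+1) (le_refl _)
    have h2 : u (2*k+1) = u 0 := by
      show (if f (GV.w ((2*k+1 : ℕ) : ZMod (2*k+1))) = none then (0:ZMod 2) else 1) = _
      rw [ZMod.natCast_self]
      show _ = (if f (GV.w ((0 : ℕ) : ZMod (2*k+1))) = none then (0:ZMod 2) else 1)
      rw [Nat.cast_zero]
    have h3 : ((2*k+1 : ℕ) : ZMod 2) = 1 := by
      push_cast
      rw [show ((2:ZMod 2)) = 0 from rfl]
      ring
    rw [h2, h3] at h1
    have : (1 : ZMod 2) = 0 := by linear_combination -h1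
    exact one_ne_zero this
  -- Step 2 : structure of the w-cycle
  have hwsome : ∀ i : ZMod (2*k+1), ∃ c, f (GV.w i) = some c := by
    intro i
    have := hf GV.al (GV.w i) (Or.inl trivial)
    rw [hal] at this
    exact wadj_hub this
  choose cw hcw using hwsome
  have hwstepraw : ∀ i, cw (i+1) = cw i + 1 ∨ cw (i+1) = cw i - 1 := by
    intro i
    have := hf (GV.w i) (GV.w (i+1)) (Or.inl rfl)
    rw [hcw, hcw] at this
    exact wadj_some.mp this
  obtain ⟨δ, hδpm, hwst⟩ : ∃ δ : ZMod (2*k+1), (δ = 1 ∨ δ = -1) ∧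
      ∀ i, cw (i+1) = cw i + δ := by
    rcases wstruct k hk cw hwstepraw with h | h
    · exact ⟨1, Or.inl rfl, h⟩
    · exact ⟨-1, Or.inr rfl, fun i => by rw [h i]; ring⟩
  -- Step 3 : structure of the z-cycles
  have hzsome : ∀ (g : ZMod (4*k-2) → GV k),
      (∀ i, GE k GV.x (GV.zx i) → GAdj k GV.x (g i)) → True := fun _ _ => trivial
  have hzxsome : ∀ i : ZMod (4*k-2), ∃ c, f (GV.zx i) = some c := by
    intro i
    by_cases hc : i = 1 ∨ i = ((2*k : ℕ) : ZMod (4*k-2))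
    · have := hf GV.x (GV.zx i) (Or.inl hc)
      rw [hx] at this
      exact wadj_hub this
    · push_neg at hc
      have := hf GV.al (GV.zx i) (Or.inl hc)
      rw [hal] at this
      exact wadj_hub this
  choose ax hax using hzxsome
  have hzxstep : ∀ i, ax (i+1) = ax i + 1 ∨ ax (i+1) = ax i - 1 := by
    intro i
    have := hf (GV.zx i) (GV.zx (i+1)) (Or.inl rfl)
    rw [hax, hax] at this
    exact wadj_some.mp this
  obtain ⟨bX, hbX⟩ : ∃ c, f GV.bx = some c := by
    have := hf GV.y GV.bx (Or.inl trivial)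
    rw [hy] at this
    exact wadj_hub this
  have hbc0 : ax 0 = bX + 1 ∨ ax 0 = bX - 1 := by
    have := hf GV.bx (GV.zx 0) (Or.inl (Or.inl rfl))
    rw [hbX, hax] at this
    exact wadj_some.mp this
  have hbc1 : ax ((2*k-1 : ℕ) : ZMod (4*k-2)) = bX + 1 ∨
      ax ((2*k-1 : ℕ) : ZMod (4*k-2)) = bX - 1 := by
    have := hf GV.bx (GV.zx ((2*k-1 : ℕ) : ZMod (4*k-2))) (Or.inl (Or.inr rfl))
    rw [hbX, hax] at this
    exact wadj_some.mp this
  obtain ⟨ε, hεpm, hzx1, hzx2⟩ := zstruct k hk ax bX hzxstep hbc0 hbc1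
  have hzysome : ∀ i : ZMod (4*k-2), ∃ c, f (GV.zy i) = some c := by
    intro i
    by_cases hc : i = 1 ∨ i = ((2*k : ℕ) : ZMod (4*k-2))
    · have := hf GV.y (GV.zy i) (Or.inl hc)
      rw [hy] at this
      exact wadj_hub this
    · push_neg at hc
      have := hf GV.al (GV.zy i) (Or.inl hc)
      rw [hal] at this
      exact wadj_hub this
  choose ay hay using hzysome
  have hzystep : ∀ i, ay (i+1) = ay i + 1 ∨ ay (i+1) = ay i - 1 := by
    intro i
    have := hf (GV.zy i) (GV.zy (i+1)) (Or.inl rfl)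
    rw [hay, hay] at this
    exact wadj_some.mp this
  obtain ⟨bY, hbY⟩ : ∃ c, f GV.b_y = some c := by
    have := hf GV.x GV.b_y (Or.inl trivial)
    rw [hx] at this
    exact wadj_hub this
  have hyc0 : ay 0 = bY + 1 ∨ ay 0 = bY - 1 := by
    have := hf GV.b_y (GV.zy 0) (Or.inl (Or.inl rfl))
    rw [hbY, hay] at this
    exact wadj_some.mp this
  have hyc1 : ay ((2*k-1 : ℕ) : ZMod (4*k-2)) = bY + 1 ∨
      ay ((2*k-1 : ℕ) : ZMod (4*k-2)) = bY - 1 := by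
    have := hf GV.b_y (GV.zy ((2*k-1 : ℕ) : ZMod (4*k-2))) (Or.inl (Or.inr rfl))
    rw [hbY, hay] at this
    exact wadj_some.mp this
  obtain ⟨η, hηpm, hzy1, hzy2⟩ := zstruct k hk ay bY hzystep hyc0 hyc1
  -- handy values
  have hax0 : ax 0 = bX + ε := by
    have h := hzx1 0 (by omega)
    rw [Nat.cast_zero] at h
    rw [h]; ring
  have hax1 : ax 1 = bX + 2*ε := by
    have h := hzx1 1 (by omega)
    rw [Nat.cast_one] at h
    rw [h]; push_cast; ring
  have hax2 : ax 2 = bX + 3*ε := by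
    have h := hzx1 2 (by omega)
    simp only [Nat.cast_ofNat] at h
    rw [h]; ring
  have haxL : ax ((2*k-1 : ℕ) : ZMod (4*k-2)) = bX - ε := by
    have h := hzx2 0 (by omega)
    rw [show 2*k-1+0 = 2*k-1 by omega] at h
    rw [h]; push_cast; ring
  have hax2k : ax ((2*k : ℕ) : ZMod (4*k-2)) = bX - 2*ε := by
    have h := hzx2 1 (by omega)
    rw [show 2*k-1+1 = 2*k by omega] at h
    rw [h]; push_cast; ring
  have hax2k1 : ax ((2*k+1 : ℕ) : ZMod (4*k-2)) = bX - 3*ε := by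
    have h := hzx2 2 (by omega)
    rw [show 2*k-1+2 = 2*k+1 by omega] at h
    rw [h]; push_cast; ring
  have hay0 : ay 0 = bY + η := by
    have h := hzy1 0 (by omega)
    rw [Nat.cast_zero] at h
    rw [h]; ring
  have hay1 : ay 1 = bY + 2*η := by
    have h := hzy1 1 (by omega)
    rw [Nat.cast_one] at h
    rw [h]; push_cast; ring
  have hay2 : ay 2 = bY + 3*η := by
    have h := hzy1 2 (by omega)
    simp only [Nat.cast_ofNat] at h
    rw [h]; ring
  have hayL : ay ((2*k-1 : ℕ) : ZMod (4*k-2)) = bY - η := by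
    have h := hzy2 0 (by omega)
    rw [show 2*k-1+0 = 2*k-1 by omega] at h
    rw [h]; push_cast; ring
  have hay2k : ay ((2*k : ℕ) : ZMod (4*k-2)) = bY - 2*η := by
    have h := hzy2 1 (by omega)
    rw [show 2*k-1+1 = 2*k by omega] at h
    rw [h]; push_cast; ring
  have hay2k1 : ay ((2*k+1 : ℕ) : ZMod (4*k-2)) = bY - 3*η := by
    have h := hzy2 2 (by omega)
    rw [show 2*k-1+2 = 2*k+1 by omega] at h
    rw [h]; push_cast; ring
  refine ⟨hf, ?_⟩
  intro v β hβ
  cases v with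
  | x =>
    exact blockX k h2z h4z h6z f GV.x (GV.zx ((2*k : ℕ) : ZMod (4*k-2))) (GV.zx 1)
      (bX - 2*ε) ε hεpm (Or.inl (Or.inr rfl)) (Or.inl (Or.inl rfl))
      (fun h => by cases h) (fun h => by cases h)
      (by rw [hax, hax2k]) (by rw [hax, hax1]; exact congrArg some (by ring)) hx β hβ
  | y =>
    exact blockX k h2z h4z h6z f GV.y (GV.zy ((2*k : ℕ) : ZMod (4*k-2))) (GV.zy 1)
      (bY - 2*η) η hηpm (Or.inl (Or.inr rfl)) (Or.inl (Or.inl rfl))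
      (fun h => by cases h) (fun h => by cases h)
      (by rw [hay, hay2k]) (by rw [hay, hay1]; exact congrArg some (by ring)) hy β hβ
  | bx =>
    exact blockV k h2z h4z f GV.bx GV.y (GV.zx ((2*k-1 : ℕ) : ZMod (4*k-2))) (GV.zx 0)
      (bX - ε) ε hεpm (Or.inr trivial) (Or.inl (Or.inr rfl)) (Or.inl (Or.inl rfl))
      (fun h => by cases h) (fun h => by cases h) (fun h => by cases h)
      hy (by rw [hax, haxL]) (by rw [hax, hax0]; exact congrArg some (by ring))
      (by rw [hbX]; exact congrArg some (by ring)) β hβ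
  | b_y =>
    exact blockV k h2z h4z f GV.b_y GV.x (GV.zy ((2*k-1 : ℕ) : ZMod (4*k-2))) (GV.zy 0)
      (bY - η) η hηpm (Or.inr trivial) (Or.inl (Or.inr rfl)) (Or.inl (Or.inl rfl))
      (fun h => by cases h) (fun h => by cases h) (fun h => by cases h)
      hx (by rw [hay, hayL]) (by rw [hay, hay0]; exact congrArg some (by ring))
      (by rw [hbY]; exact congrArg some (by ring)) β hβ
  | al =>
    have hc1 : cw 1 = cw 0 + δ := by
      have := hwst 0
      rwa [zero_add] at this
    have hc2 : cw 2 = cw 0 + 2*δ := by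
      have := hwst 1
      rw [hc1] at this
      rw [show (1 : ZMod (2*k+1)) + 1 = 2 from by ring] at this
      rw [this]; ring
    exact blockAl k h1z h2z h4z f GV.al (GV.w 0) (GV.w 1) (GV.w 2) (cw 0) δ hδpm
      (Or.inl trivial) (Or.inl trivial) (Or.inl trivial)
      (fun h => by cases h) (fun h => by cases h) (fun h => by cases h)
      (hcw 0) (by rw [hcw, hc1]) (by rw [hcw, hc2]) hal β hβ
  | w i =>
    have hone : (1 : ZMod (2*k+1)) ≠ 0 := h1z
    have hcm : cw (i-1) = cw i - δ := by
      have := hwst (i-1)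
      rw [sub_add_cancel] at this
      rw [this]; ring
    refine blockV k h2z h4z f (GV.w i) GV.al (GV.w (i-1)) (GV.w (i+1))
      (cw i - δ) δ hδpm (Or.inr trivial) ?_ (Or.inl rfl)
      (fun h => by cases h) ?_ ?_
      hal (by rw [hcw, hcm]) (by rw [hcw, hwst i]; exact congrArg some (by ring))
      (by rw [hcw]; exact congrArg some (by ring)) β hβ
    · exact Or.inr (show i = (i-1) + 1 from by ring)
    · intro h
      have : i - 1 = i := by injection h
      exact hone (by linear_combination -this)
    · intro h
      have : i + 1 = i := by injection h
      exact hone (by linear_combination this)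
  | zx i =>
    obtain ⟨j, hjlt, rfl⟩ : ∃ j : ℕ, j < 4*k-2 ∧ i = ((j:ℕ) : ZMod (4*k-2)) :=
      ⟨i.val, ZMod.val_lt i, (ZMod.natCast_rightInverse i).symm⟩
    rcases (by omega : j = 0 ∨ j = 1 ∨ (2 ≤ j ∧ j ≤ 2*k-2) ∨ j = 2*k-1 ∨ j = 2*k ∨
        (2*k+1 ≤ j ∧ j ≤ 4*k-3)) with hc | hc | hc | hc | hc | hc
    · subst hc
      refine blockV k h2z h4z f (GV.zx ((0:ℕ) : ZMod (4*k-2))) GV.al GV.bx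
        (GV.zx ((1:ℕ) : ZMod (4*k-2))) bX ε hεpm ?_ ?_ ?_
        (fun h => by cases h) (fun h => by cases h) ?_
        hal hbX ?_ ?_ β hβ
      · refine Or.inr ⟨?_, ?_⟩
        · rw [Nat.cast_zero]
          exact fun h => hm1 h.symm
        · exact hcastne 0 (2*k) (by omega) (by omega) (by omega)
      · exact Or.inr (Or.inl (by rw [Nat.cast_zero]))
      · exact Or.inl (show ((1:ℕ) : ZMod (4*k-2)) = ((0:ℕ) : ZMod (4*k-2)) + 1 by
          push_cast; ring)
      · intro h
        injection h with h'
        exact hcastne 1 0 (by omega) (by omega) (by omega) h'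
      · rw [hax, Nat.cast_one, hax1]
      · rw [hax, Nat.cast_zero, hax0]
    · subst hc
      refine blockV k h2z h4z f (GV.zx ((1:ℕ) : ZMod (4*k-2))) GV.x
        (GV.zx ((0:ℕ) : ZMod (4*k-2))) (GV.zx ((2:ℕ) : ZMod (4*k-2))) (bX + ε) ε hεpm
        ?_ ?_ ?_ (fun h => by cases h) ?_ ?_ hx ?_ ?_ ?_ β hβ
      · exact Or.inr (Or.inl (by rw [Nat.cast_one]))
      · exact Or.inr (show ((1:ℕ) : ZMod (4*k-2)) = ((0:ℕ) : ZMod (4*k-2)) + 1 by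
          push_cast; ring)
      · exact Or.inl (show ((2:ℕ) : ZMod (4*k-2)) = ((1:ℕ) : ZMod (4*k-2)) + 1 by
          push_cast; ring)
      · intro h
        injection h with h'
        exact hcastne 0 1 (by omega) (by omega) (by omega) h'
      · intro h
        injection h with h'
        exact hcastne 2 1 (by omega) (by omega) (by omega) h'
      · rw [hax, Nat.cast_zero, hax0]
      · rw [hax, Nat.cast_ofNat, hax2]
        exact congrArg some (by ring)
      · rw [hax, Nat.cast_one, hax1]
        exact congrArg some (by ring)
    · obtain ⟨hc1, hc2⟩ := hc
      have e1 : ax ((j-1 : ℕ) : ZMod (4*k-2)) = bX + (j : ZMod (2*k+1)) * ε := by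
        have h := hzx1 (j-1) (by omega)
        rw [h, Nat.cast_sub (by omega : 1 ≤ j)]
        push_cast; ring
      have e2 : ax ((j+1 : ℕ) : ZMod (4*k-2)) = bX + ((j : ZMod (2*k+1)) + 2) * ε := by
        have h := hzx1 (j+1) (by omega)
        rw [h]; push_cast; ring
      have ev : ax ((j : ℕ) : ZMod (4*k-2)) = bX + ((j : ZMod (2*k+1)) + 1) * ε :=
        hzx1 j (by omega)
      refine blockV k h2z h4z f (GV.zx ((j:ℕ) : ZMod (4*k-2))) GV.al
        (GV.zx ((j-1:ℕ) : ZMod (4*k-2))) (GV.zx ((j+1:ℕ) : ZMod (4*k-2)))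
        (bX + (j : ZMod (2*k+1)) * ε) ε hεpm ?_ ?_ ?_
        (fun h => by cases h) ?_ ?_ hal ?_ ?_ ?_ β hβ
      · refine Or.inr ⟨?_, ?_⟩
        · rw [show (1 : ZMod (4*k-2)) = ((1:ℕ) : ZMod (4*k-2)) by rw [Nat.cast_one]]
          exact hcastne j 1 (by omega) (by omega) (by omega)
        · exact hcastne j (2*k) (by omega) (by omega) (by omega)
      · exact Or.inr (show ((j:ℕ) : ZMod (4*k-2)) = ((j-1:ℕ) : ZMod (4*k-2)) + 1 by
          rw [Nat.cast_sub (by omega : 1 ≤ j)]; push_cast; ring)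
      · exact Or.inl (show ((j+1:ℕ) : ZMod (4*k-2)) = ((j:ℕ) : ZMod (4*k-2)) + 1 by
          push_cast; ring)
      · intro h
        injection h with h'
        exact hcastne (j-1) j (by omega) (by omega) (by omega) h'
      · intro h
        injection h with h'
        exact hcastne (j+1) j (by omega) (by omega) (by omega) h'
      · rw [hax, e1]
      · rw [hax, e2]
        exact congrArg some (by ring)
      · rw [hax, ev]
        exact congrArg some (by ring)
    · subst hc
      refine blockV k h2z h4z f (GV.zx ((2*k-1:ℕ) : ZMod (4*k-2))) GV.al
        (GV.zx ((2*k:ℕ) : ZMod (4*k-2))) GV.bx (bX - 2*ε) ε hεpm ?_ ?_ ?_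
        (fun h => by cases h) ?_ (fun h => by cases h)
        hal ?_ ?_ ?_ β hβ
      · refine Or.inr ⟨?_, ?_⟩
        · rw [show (1 : ZMod (4*k-2)) = ((1:ℕ) : ZMod (4*k-2)) by rw [Nat.cast_one]]
          exact hcastne (2*k-1) 1 (by omega) (by omega) (by omega)
        · exact hcastne (2*k-1) (2*k) (by omega) (by omega) (by omega)
      · exact Or.inl (show ((2*k:ℕ) : ZMod (4*k-2)) = ((2*k-1:ℕ) : ZMod (4*k-2)) + 1 by
          rw [show 2*k = (2*k-1)+1 by omega]; push_cast; ring)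
      · exact Or.inr (Or.inr rfl)
      · intro h
        injection h with h'
        exact hcastne (2*k) (2*k-1) (by omega) (by omega) (by omega) h'
      · rw [hax, hax2k]
      · rw [hbX]
        exact congrArg some (by ring)
      · rw [hax, haxL]
        exact congrArg some (by ring)
    · subst hc
      refine blockV k h2z h4z f (GV.zx ((2*k:ℕ) : ZMod (4*k-2))) GV.x
        (GV.zx ((2*k+1:ℕ) : ZMod (4*k-2))) (GV.zx ((2*k-1:ℕ) : ZMod (4*k-2)))
        (bX - 3*ε) ε hεpm ?_ ?_ ?_
        (fun h => by cases h) ?_ ?_ hx ?_ ?_ ?_ β hβ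
      · exact Or.inr (Or.inr rfl)
      · exact Or.inl (show ((2*k+1:ℕ) : ZMod (4*k-2)) = ((2*k:ℕ) : ZMod (4*k-2)) + 1 by
          push_cast; ring)
      · exact Or.inr (show ((2*k:ℕ) : ZMod (4*k-2)) = ((2*k-1:ℕ) : ZMod (4*k-2)) + 1 by
          rw [show 2*k = (2*k-1)+1 by omega]; push_cast; ring)
      · intro h
        injection h with h'
        exact hcastne (2*k+1) (2*k) (by omega) (by omega) (by omega) h'
      · intro h
        injection h with h'
        exact hcastne (2*k-1) (2*k) (by omega) (by omega) (by omega) h'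
      · rw [hax, hax2k1]
      · rw [hax, haxL]
        exact congrArg some (by ring)
      · rw [hax, hax2k]
        exact congrArg some (by ring)
    · obtain ⟨hc1, hc2⟩ := hc
      have e1 : ax ((j-1 : ℕ) : ZMod (4*k-2)) =
          bX - (((j - 2*k : ℕ) : ZMod (2*k+1)) + 1) * ε := by
        have h := hzx2 (j-2*k) (by omega)
        rw [show 2*k-1+(j-2*k) = j-1 by omega] at h
        exact h
      have ev : ax ((j : ℕ) : ZMod (4*k-2)) =
          bX - (((j - 2*k : ℕ) : ZMod (2*k+1)) + 2) * ε := by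
        have h := hzx2 (j-2*k+1) (by omega)
        rw [show 2*k-1+(j-2*k+1) = j by omega] at h
        rw [h]; push_cast; ring
      have e2 : ax ((j+1 : ℕ) : ZMod (4*k-2)) =
          bX - (((j - 2*k : ℕ) : ZMod (2*k+1)) + 3) * ε := by
        have h := hzx2 (j-2*k+2) (by omega)
        rw [show 2*k-1+(j-2*k+2) = j+1 by omega] at h
        rw [h]; push_cast; ring
      refine blockV k h2z h4z f (GV.zx ((j:ℕ) : ZMod (4*k-2))) GV.al
        (GV.zx ((j-1:ℕ) : ZMod (4*k-2))) (GV.zx ((j+1:ℕ) : ZMod (4*k-2)))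
        (bX - (((j - 2*k : ℕ) : ZMod (2*k+1)) + 1) * ε) (-ε) ?_ ?_ ?_ ?_
        (fun h => by cases h) ?_ ?_ hal ?_ ?_ ?_ β hβ
      · rcases hεpm with h | h
        · exact Or.inr (by rw [h])
        · exact Or.inl (by rw [h]; ring)
      · refine Or.inr ⟨?_, ?_⟩
        · rw [show (1 : ZMod (4*k-2)) = ((1:ℕ) : ZMod (4*k-2)) by rw [Nat.cast_one]]
          exact hcastne j 1 (by omega) (by omega) (by omega)
        · exact hcastne j (2*k) (by omega) (by omega) (by omega)
      · exact Or.inr (show ((j:ℕ) : ZMod (4*k-2)) = ((j-1:ℕ) : ZMod (4*k-2)) + 1 by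
          rw [Nat.cast_sub (by omega : 1 ≤ j)]; push_cast; ring)
      · exact Or.inl (show ((j+1:ℕ) : ZMod (4*k-2)) = ((j:ℕ) : ZMod (4*k-2)) + 1 by
          push_cast; ring)
      · intro h
        injection h with h'
        exact hcastne (j-1) j (by omega) (by omega) (by omega) h'
      · intro h
        injection h with h'
        apply hm1
        have h2 : ((j+1 : ℕ) : ZMod (4*k-2)) = ((j:ℕ) : ZMod (4*k-2)) + 1 := by
          push_cast; ring
        rw [h2] at h'
        linear_combination h'
      · rw [hax, e1]
      · rw [hax, e2]
        exact congrArg some (by ring)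
      · rw [hax, ev]
        exact congrArg some (by ring)
  | zy i =>
    obtain ⟨j, hjlt, rfl⟩ : ∃ j : ℕ, j < 4*k-2 ∧ i = ((j:ℕ) : ZMod (4*k-2)) :=
      ⟨i.val, ZMod.val_lt i, (ZMod.natCast_rightInverse i).symm⟩
    rcases (by omega : j = 0 ∨ j = 1 ∨ (2 ≤ j ∧ j ≤ 2*k-2) ∨ j = 2*k-1 ∨ j = 2*k ∨
        (2*k+1 ≤ j ∧ j ≤ 4*k-3)) with hc | hc | hc | hc | hc | hc
    · subst hc
      refine blockV k h2z h4z f (GV.zy ((0:ℕ) : ZMod (4*k-2))) GV.al GV.b_y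
        (GV.zy ((1:ℕ) : ZMod (4*k-2))) bY η hηpm ?_ ?_ ?_
        (fun h => by cases h) (fun h => by cases h) ?_
        hal hbY ?_ ?_ β hβ
      · refine Or.inr ⟨?_, ?_⟩
        · rw [Nat.cast_zero]
          exact fun h => hm1 h.symm
        · exact hcastne 0 (2*k) (by omega) (by omega) (by omega)
      · exact Or.inr (Or.inl (by rw [Nat.cast_zero]))
      · exact Or.inl (show ((1:ℕ) : ZMod (4*k-2)) = ((0:ℕ) : ZMod (4*k-2)) + 1 by
          push_cast; ring)
      · intro h
        injection h with h'
        exact hcastne 1 0 (by omega) (by omega) (by omega) h'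
      · rw [hay, Nat.cast_one, hay1]
      · rw [hay, Nat.cast_zero, hay0]
    · subst hc
      refine blockV k h2z h4z f (GV.zy ((1:ℕ) : ZMod (4*k-2))) GV.y
        (GV.zy ((0:ℕ) : ZMod (4*k-2))) (GV.zy ((2:ℕ) : ZMod (4*k-2))) (bY + η) η hηpm
        ?_ ?_ ?_ (fun h => by cases h) ?_ ?_ hy ?_ ?_ ?_ β hβ
      · exact Or.inr (Or.inl (by rw [Nat.cast_one]))
      · exact Or.inr (show ((1:ℕ) : ZMod (4*k-2)) = ((0:ℕ) : ZMod (4*k-2)) + 1 by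
          push_cast; ring)
      · exact Or.inl (show ((2:ℕ) : ZMod (4*k-2)) = ((1:ℕ) : ZMod (4*k-2)) + 1 by
          push_cast; ring)
      · intro h
        injection h with h'
        exact hcastne 0 1 (by omega) (by omega) (by omega) h'
      · intro h
        injection h with h'
        exact hcastne 2 1 (by omega) (by omega) (by omega) h'
      · rw [hay, Nat.cast_zero, hay0]
      · rw [hay, Nat.cast_ofNat, hay2]
        exact congrArg some (by ring)
      · rw [hay, Nat.cast_one, hay1]
        exact congrArg some (by ring)
    · obtain ⟨hc1, hc2⟩ := hc
      have e1 : ay ((j-1 : ℕ) : ZMod (4*k-2)) = bY + (j : ZMod (2*k+1)) * η := by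
        have h := hzy1 (j-1) (by omega)
        rw [h, Nat.cast_sub (by omega : 1 ≤ j)]
        push_cast; ring
      have e2 : ay ((j+1 : ℕ) : ZMod (4*k-2)) = bY + ((j : ZMod (2*k+1)) + 2) * η := by
        have h := hzy1 (j+1) (by omega)
        rw [h]; push_cast; ring
      have ev : ay ((j : ℕ) : ZMod (4*k-2)) = bY + ((j : ZMod (2*k+1)) + 1) * η :=
        hzy1 j (by omega)
      refine blockV k h2z h4z f (GV.zy ((j:ℕ) : ZMod (4*k-2))) GV.al
        (GV.zy ((j-1:ℕ) : ZMod (4*k-2))) (GV.zy ((j+1:ℕ) : ZMod (4*k-2)))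
        (bY + (j : ZMod (2*k+1)) * η) η hηpm ?_ ?_ ?_
        (fun h => by cases h) ?_ ?_ hal ?_ ?_ ?_ β hβ
      · refine Or.inr ⟨?_, ?_⟩
        · rw [show (1 : ZMod (4*k-2)) = ((1:ℕ) : ZMod (4*k-2)) by rw [Nat.cast_one]]
          exact hcastne j 1 (by omega) (by omega) (by omega)
        · exact hcastne j (2*k) (by omega) (by omega) (by omega)
      · exact Or.inr (show ((j:ℕ) : ZMod (4*k-2)) = ((j-1:ℕ) : ZMod (4*k-2)) + 1 by
          rw [Nat.cast_sub (by omega : 1 ≤ j)]; push_cast; ring)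
      · exact Or.inl (show ((j+1:ℕ) : ZMod (4*k-2)) = ((j:ℕ) : ZMod (4*k-2)) + 1 by
          push_cast; ring)
      · intro h
        injection h with h'
        exact hcastne (j-1) j (by omega) (by omega) (by omega) h'
      · intro h
        injection h with h'
        exact hcastne (j+1) j (by omega) (by omega) (by omega) h'
      · rw [hay, e1]
      · rw [hay, e2]
        exact congrArg some (by ring)
      · rw [hay, ev]
        exact congrArg some (by ring)
    · subst hc
      refine blockV k h2z h4z f (GV.zy ((2*k-1:ℕ) : ZMod (4*k-2))) GV.al
        (GV.zy ((2*k:ℕ) : ZMod (4*k-2))) GV.b_y (bY - 2*η) η hηpm ?_ ?_ ?_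
        (fun h => by cases h) ?_ (fun h => by cases h)
        hal ?_ ?_ ?_ β hβ
      · refine Or.inr ⟨?_, ?_⟩
        · rw [show (1 : ZMod (4*k-2)) = ((1:ℕ) : ZMod (4*k-2)) by rw [Nat.cast_one]]
          exact hcastne (2*k-1) 1 (by omega) (by omega) (by omega)
        · exact hcastne (2*k-1) (2*k) (by omega) (by omega) (by omega)
      · exact Or.inl (show ((2*k:ℕ) : ZMod (4*k-2)) = ((2*k-1:ℕ) : ZMod (4*k-2)) + 1 by
          rw [show 2*k = (2*k-1)+1 by omega]; push_cast; ring)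
      · exact Or.inr (Or.inr rfl)
      · intro h
        injection h with h'
        exact hcastne (2*k) (2*k-1) (by omega) (by omega) (by omega) h'
      · rw [hay, hay2k]
      · rw [hbY]
        exact congrArg some (by ring)
      · rw [hay, hayL]
        exact congrArg some (by ring)
    · subst hc
      refine blockV k h2z h4z f (GV.zy ((2*k:ℕ) : ZMod (4*k-2))) GV.y
        (GV.zy ((2*k+1:ℕ) : ZMod (4*k-2))) (GV.zy ((2*k-1:ℕ) : ZMod (4*k-2)))
        (bY - 3*η) η hηpm ?_ ?_ ?_
        (fun h => by cases h) ?_ ?_ hy ?_ ?_ ?_ β hβ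
      · exact Or.inr (Or.inr rfl)
      · exact Or.inl (show ((2*k+1:ℕ) : ZMod (4*k-2)) = ((2*k:ℕ) : ZMod (4*k-2)) + 1 by
          push_cast; ring)
      · exact Or.inr (show ((2*k:ℕ) : ZMod (4*k-2)) = ((2*k-1:ℕ) : ZMod (4*k-2)) + 1 by
          rw [show 2*k = (2*k-1)+1 by omega]; push_cast; ring)
      · intro h
        injection h with h'
        exact hcastne (2*k+1) (2*k) (by omega) (by omega) (by omega) h'
      · intro h
        injection h with h'
        exact hcastne (2*k-1) (2*k) (by omega) (by omega) (by omega) h'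
      · rw [hay, hay2k1]
      · rw [hay, hayL]
        exact congrArg some (by ring)
      · rw [hay, hay2k]
        exact congrArg some (by ring)
    · obtain ⟨hc1, hc2⟩ := hc
      have e1 : ay ((j-1 : ℕ) : ZMod (4*k-2)) =
          bY - (((j - 2*k : ℕ) : ZMod (2*k+1)) + 1) * η := by
        have h := hzy2 (j-2*k) (by omega)
        rw [show 2*k-1+(j-2*k) = j-1 by omega] at h
        exact h
      have ev : ay ((j : ℕ) : ZMod (4*k-2)) =
          bY - (((j - 2*k : ℕ) : ZMod (2*k+1)) + 2) * η := by
        have h := hzy2 (j-2*k+1) (by omega)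
        rw [show 2*k-1+(j-2*k+1) = j by omega] at h
        rw [h]; push_cast; ring
      have e2 : ay ((j+1 : ℕ) : ZMod (4*k-2)) =
          bY - (((j - 2*k : ℕ) : ZMod (2*k+1)) + 3) * η := by
        have h := hzy2 (j-2*k+2) (by omega)
        rw [show 2*k-1+(j-2*k+2) = j+1 by omega] at h
        rw [h]; push_cast; ring
      refine blockV k h2z h4z f (GV.zy ((j:ℕ) : ZMod (4*k-2))) GV.al
        (GV.zy ((j-1:ℕ) : ZMod (4*k-2))) (GV.zy ((j+1:ℕ) : ZMod (4*k-2)))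
        (bY - (((j - 2*k : ℕ) : ZMod (2*k+1)) + 1) * η) (-η) ?_ ?_ ?_ ?_
        (fun h => by cases h) ?_ ?_ hal ?_ ?_ ?_ β hβ
      · rcases hηpm with h | h
        · exact Or.inr (by rw [h])
        · exact Or.inl (by rw [h]; ring)
      · refine Or.inr ⟨?_, ?_⟩
        · rw [show (1 : ZMod (4*k-2)) = ((1:ℕ) : ZMod (4*k-2)) by rw [Nat.cast_one]]
          exact hcastne j 1 (by omega) (by omega) (by omega)
        · exact hcastne j (2*k) (by omega) (by omega) (by omega)
      · exact Or.inr (show ((j:ℕ) : ZMod (4*k-2)) = ((j-1:ℕ) : ZMod (4*k-2)) + 1 by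
          rw [Nat.cast_sub (by omega : 1 ≤ j)]; push_cast; ring)
      · exact Or.inl (show ((j+1:ℕ) : ZMod (4*k-2)) = ((j:ℕ) : ZMod (4*k-2)) + 1 by
          push_cast; ring)
      · intro h
        injection h with h'
        exact hcastne (j-1) j (by omega) (by omega) (by omega) h'
      · intro h
        injection h with h'
        apply hm1
        have h2 : ((j+1 : ℕ) : ZMod (4*k-2)) = ((j:ℕ) : ZMod (4*k-2)) + 1 := by
          push_cast; ring
        rw [h2] at h'
        linear_combination h'
      · rw [hay, e1]
      · rw [hay, e2]
        exact congrArg some (by ring)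
      · rw [hay, ev]
        exact congrArg some (by ring)
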